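/- Let G be a finite connected simple graph that is trivially perfect (no induced P4 and no induced C4). Then α'(G) = θ_e(G). -/

import Mathlib

namespace ECG

/-- The edge-clique graph `K_e(G)`: its vertices are the edges of `G`, and two distinct
edges are adjacent exactly when all their endpoints are pairwise adjacent in `G`
(i.e. the two edges lie in a common clique of `G`). -/
def edgeCliqueGraph {V : Type*} (G : SimpleGraph V) : SimpleGraph G.edgeSet where
  Adj e f := e ≠ f ∧ G.IsClique {v | v ∈ (e : Sym2 V) ∨ v ∈ (f : Sym2 V)}
  symm := by
    refine ⟨?_⟩; rintro e f ⟨hne, hcl⟩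
    refine ⟨hne.symm, ?_⟩
    have h : {v | v ∈ (f : Sym2 V) ∨ v ∈ (e : Sym2 V)} =
        {v | v ∈ (e : Sym2 V) ∨ v ∈ (f : Sym2 V)} := by
      ext v; exact or_comm
    rw [h]; exact hcl
  loopless := ⟨fun e h => h.1 rfl⟩

/-- A set of vertices is independent when no two of its members are adjacent. -/
def IsIndepSet {V : Type*} (G : SimpleGraph V) (S : Set V) : Prop :=
  S.Pairwise fun a b => ¬ G.Adj a b

/-- The independence number `α(G)`: the maximum cardinality of an independent set. -/
noncomputable def indepNum {V : Type*} (G : SimpleGraph V) : ℕ :=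
  sSup {n | ∃ S : Finset V, IsIndepSet G ↑S ∧ S.card = n}

end ECG

namespace ECG

/-- The edge-clique cover number `θ_e(G)`: the minimum cardinality of a family of cliques
of `G` such that every edge of `G` has both of its endpoints in some member of the family. -/
noncomputable def edgeCliqueCoverNum {V : Type*} (G : SimpleGraph V) : ℕ :=
  sInf {n | ∃ F : Finset (Set V), F.card = n ∧ (∀ C ∈ F, G.IsClique C) ∧
    ∀ e ∈ G.edgeSet, ∃ C ∈ F, ∀ v ∈ e, v ∈ C}

end ECG

section Helpers
set_option linter.unusedSectionVars false
open SimpleGraph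

variable {V : Type*} [Fintype V] {G : SimpleGraph V}

private lemma ecg_noP4aux (G : SimpleGraph V)
    (hP4 : IsEmpty (SimpleGraph.pathGraph 4 ↪g G))
    {a x y b : V} (hxy : G.Adj x y) (hax : G.Adj a x) (hyb : G.Adj y b)
    (hay : ¬ G.Adj a y) (hxb : ¬ G.Adj x b) (hab : ¬ G.Adj a b)
    (hay' : a ≠ y) (hbx : b ≠ x) : False := by
  have hab' : a ≠ b := by rintro rfl; exact hay (G.adj_symm hyb)
  have h1 : G.Adj x a := hax.symm
  have h2 : G.Adj y x := hxy.symm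
  have h3 : G.Adj b y := hyb.symm
  have n1 : ¬ G.Adj y a := fun h => hay h.symm
  have n2 : ¬ G.Adj b x := fun h => hxb h.symm
  have n3 : ¬ G.Adj b a := fun h => hab h.symm
  have e3 : ((3:Fin 4):ℕ) = 3 := rfl
  refine hP4.elim ⟨⟨![a,x,y,b], ?_⟩, ?_⟩
  · intro u v huv
    fin_cases u <;> fin_cases v <;> simp_all
  · intro u v
    change G.Adj (![a,x,y,b] u) (![a,x,y,b] v) ↔ _
    fin_cases u <;> fin_cases v <;>
      simp_all [pathGraph_adj, G.loopless, e3]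

private lemma ecg_noC4aux (G : SimpleGraph V)
    (hC4 : IsEmpty (SimpleGraph.cycleGraph 4 ↪g G))
    {a x y b : V} (hxy : G.Adj x y) (hax : G.Adj a x) (hyb : G.Adj y b)
    (hay : ¬ G.Adj a y) (hxb : ¬ G.Adj x b) (hab : G.Adj a b)
    (hay' : a ≠ y) (hbx : b ≠ x) : False := by
  have hab' : a ≠ b := hab.ne
  have h1 : G.Adj x a := hax.symm
  have h2 : G.Adj y x := hxy.symm
  have h3 : G.Adj b y := hyb.symm
  have h4 : G.Adj b a := hab.symm
  have n1 : ¬ G.Adj y a := fun h => hay h.symm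
  have n2 : ¬ G.Adj b x := fun h => hxb h.symm
  refine hC4.elim ⟨⟨![a,x,y,b], ?_⟩, ?_⟩
  · intro u v huv
    fin_cases u <;> fin_cases v <;> simp_all
  · intro u v
    change G.Adj (![a,x,y,b] u) (![a,x,y,b] v) ↔ _
    fin_cases u <;> fin_cases v <;>
      simp_all [cycleGraph_adj, G.loopless] <;> decide

/-- Along any edge of a trivially perfect graph, closed neighborhoods are nested. -/
private lemma ecg_comparable (hP4 : IsEmpty (SimpleGraph.pathGraph 4 ↪g G))
    (hC4 : IsEmpty (SimpleGraph.cycleGraph 4 ↪g G)) {x y : V} (hxy : G.Adj x y) :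
    (∀ z, G.Adj x z → z = y ∨ G.Adj y z) ∨ (∀ z, G.Adj y z → z = x ∨ G.Adj x z) := by
  by_contra h
  push_neg at h
  obtain ⟨⟨a, hax, hay', hay⟩, ⟨b, hyb, hbx, hxb⟩⟩ := h
  have hay2 : ¬ G.Adj a y := fun h => hay h.symm
  by_cases hab : G.Adj a b
  · exact ecg_noC4aux G hC4 hxy hax.symm hyb hay2 hxb hab hay' hbx
  · exact ecg_noP4aux G hP4 hxy hax.symm hyb hay2 hxb hab hay' hbx

/-- Every maximal clique of a trivially perfect graph contains a simplicial vertex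
whose closed neighborhood is exactly the clique. -/
private lemma ecg_simplicial (hP4 : IsEmpty (SimpleGraph.pathGraph 4 ↪g G))
    (hC4 : IsEmpty (SimpleGraph.cycleGraph 4 ↪g G)) {M : Set V}
    (hM : Maximal G.IsClique M) (hne : M.Nonempty) :
    ∃ l ∈ M, ∀ v, G.Adj l v → v ∈ M := by
  obtain ⟨l, hl, hmin⟩ := Set.exists_min_image M (fun v => (G.neighborSet v).ncard)
    (Set.toFinite M) hne
  refine ⟨l, hl, fun w hlw => ?_⟩
  by_contra hw
  have hnc : ¬ G.IsClique (insert w M) := by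
    intro hcl
    exact hw (hM.2 hcl (Set.subset_insert w M) (Set.mem_insert w M))
  rw [SimpleGraph.isClique_insert] at hnc
  push_neg at hnc
  obtain ⟨m, hm, hmw, hnadj⟩ := hnc hM.1
  have hnadj' : ¬ G.Adj m w := fun h => hnadj h.symm
  rcases eq_or_ne m l with rfl | hml
  · exact hnadj' hlw
  have hlm : G.Adj l m := hM.1 hl hm (Ne.symm hml)
  rcases ecg_comparable hP4 hC4 hlm with h1 | h2
  · rcases h1 w hlw with rfl | h
    · exact hmw rfl
    · exact hnadj' h
  · have hsub : insert m (G.neighborSet m) ⊆ insert l (G.neighborSet l) := by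
      rintro z (rfl | hz)
      · exact Set.mem_insert_of_mem _ hlm
      · rcases h2 z hz with rfl | h
        · exact Set.mem_insert _ _
        · exact Set.mem_insert_of_mem _ h
    have hcard : (insert l (G.neighborSet l)).ncard ≤ (insert m (G.neighborSet m)).ncard := by
      rw [Set.ncard_insert_of_notMem (by simp) (Set.toFinite _),
        Set.ncard_insert_of_notMem (by simp) (Set.toFinite _)]
      exact Nat.add_le_add_right (hmin m hm) 1
    have heq := Set.eq_of_subset_of_ncard_le hsub hcard (Set.toFinite _)
    have : w ∈ insert m (G.neighborSet m) := heq ▸ Set.mem_insert_of_mem _ hlw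
    rcases this with rfl | h
    · exact hmw rfl
    · exact hnadj' h

/-- Every edge lies in some maximal clique. -/
private lemma ecg_exists_maxclique {a b : V} (hab : G.Adj a b) :
    ∃ M : Set V, Maximal G.IsClique M ∧ a ∈ M ∧ b ∈ M := by
  obtain ⟨M, hM, hmax⟩ := Set.Finite.exists_maximalFor id
    {C : Set V | G.IsClique C ∧ a ∈ C ∧ b ∈ C} (Set.toFinite _)
    ⟨{a, b}, ⟨SimpleGraph.isClique_pair.mpr (fun _ => hab), Set.mem_insert a _,
      Set.mem_insert_of_mem _ rfl⟩⟩
  refine ⟨M, ⟨hM.1, fun D hD hMD => ?_⟩, hM.2.1, hM.2.2⟩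
  have := hmax ⟨hD, hMD hM.2.1, hMD hM.2.2⟩ hMD
  simp only [id] at this
  exact this.ge

/-- The general inequality `α'(G) ≤ θ_e(G)`. -/
private lemma ecg_indep_le_cover (G : SimpleGraph V) :
    ECG.indepNum (ECG.edgeCliqueGraph G) ≤ ECG.edgeCliqueCoverNum G := by
  classical
  unfold ECG.indepNum ECG.edgeCliqueCoverNum
  have h0 : (0:ℕ) ∈ {n | ∃ S : Finset G.edgeSet,
      ECG.IsIndepSet (ECG.edgeCliqueGraph G) ↑S ∧ S.card = n} :=
    ⟨∅, by simp [ECG.IsIndepSet], by simp⟩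
  apply csSup_le ⟨0, h0⟩
  rintro n ⟨S, hS, rfl⟩
  apply le_csInf
  · refine ⟨(G.edgeFinset.image (fun e => {v | v ∈ e})).card,
      G.edgeFinset.image (fun e => {v | v ∈ e}), rfl, ?_, ?_⟩
    · intro C hC
      simp only [Finset.mem_image, SimpleGraph.mem_edgeFinset] at hC
      obtain ⟨e, he, rfl⟩ := hC
      induction e with
      | _ a b =>
        rw [SimpleGraph.mem_edgeSet] at he
        intro u hu v hv huv
        simp only [Set.mem_setOf_eq, Sym2.mem_iff] at hu hv
        rcases hu with rfl | rfl <;> rcases hv with rfl | rfl <;>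
          first | exact absurd rfl huv | exact he | exact he.symm
    · intro e he
      exact ⟨{v | v ∈ e}, Finset.mem_image_of_mem _ (SimpleGraph.mem_edgeFinset.mpr he),
        fun v hv => hv⟩
  · rintro m ⟨F, rfl, hcl, hcov⟩
    have hpick : ∀ e : G.edgeSet, e ∈ S → ∃ C ∈ F, ∀ v ∈ (e : Sym2 V), v ∈ C :=
      fun e _ => hcov e e.2
    choose g hg1 hg2 using hpick
    calc S.card = S.attach.card := (Finset.card_attach (s := S)).symm
    _ ≤ F.card := by
      apply Finset.card_le_card_of_injOn (fun e => g e.1 e.2) (fun e _ => hg1 e.1 e.2)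
      rintro ⟨e, he⟩ - ⟨f, hf⟩ - hef
      dsimp only at hef
      by_contra hne
      have hne' : e ≠ f := fun h => hne (by simpa using h)
      apply hS he hf hne'
      refine (show _ ∧ _ from ⟨hne', ?_⟩)
      apply (hcl _ (hg1 e he)).subset
      rintro v (hv | hv)
      · exact hg2 e he v hv
      · rw [hef]; exact hg2 f hf v hv

end Helpers

/-- For a finite connected trivially perfect graph `G` (no induced `P₄`
and no induced `C₄`), `α'(G) = θ_e(G)`. -/
theorem alpha'_eq_edgeCliqueCoverNum_of_triviallyPerfect {V : Type*} [Fintype V]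
    (G : SimpleGraph V) (hconn : G.Connected)
    (hP4 : IsEmpty (SimpleGraph.pathGraph 4 ↪g G))
    (hC4 : IsEmpty (SimpleGraph.cycleGraph 4 ↪g G)) :
    ECG.indepNum (ECG.edgeCliqueGraph G) = ECG.edgeCliqueCoverNum G := by
  classical
  refine le_antisymm (ecg_indep_le_cover G) ?_
  by_cases hE : G.edgeSet.Nonempty
  swap
  · have h0 : (0:ℕ) ∈ {n | ∃ F : Finset (Set V), F.card = n ∧ (∀ C ∈ F, G.IsClique C) ∧
        ∀ e ∈ G.edgeSet, ∃ C ∈ F, ∀ v ∈ e, v ∈ C} :=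
      ⟨∅, rfl, by simp, fun e he => absurd ⟨e, he⟩ hE⟩
    calc ECG.edgeCliqueCoverNum G ≤ 0 := Nat.sInf_le h0
    _ ≤ _ := Nat.zero_le _
  · have hnb : ∀ v : V, ∃ u, G.Adj v u := by
      intro v
      obtain ⟨e0, he0⟩ := hE
      induction e0 with
      | _ a b =>
        rw [SimpleGraph.mem_edgeSet] at he0
        have hex : ∃ u, u ≠ v := by
          rcases eq_or_ne a v with rfl | h
          · exact ⟨b, fun h' => (G.loopless.irrefl a (h' ▸ he0))⟩
          · exact ⟨a, h⟩
        obtain ⟨u, hu⟩ := hex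
        obtain ⟨p⟩ := hconn.preconnected v u
        cases p with
        | nil => exact absurd rfl hu
        | cons h _ => exact ⟨_, h⟩
    set F : Finset (Set V) :=
      Set.Finite.toFinset (Set.toFinite {M : Set V | Maximal G.IsClique M}) with hF
    have hmemF : ∀ M : Set V, M ∈ F ↔ Maximal G.IsClique M := by
      intro M; simp [hF]
    have hcov : ∀ e ∈ G.edgeSet, ∃ C ∈ F, ∀ v ∈ e, v ∈ C := by
      intro e he
      induction e with
      | _ a b =>
        rw [SimpleGraph.mem_edgeSet] at he
        obtain ⟨M, hM, haM, hbM⟩ := ecg_exists_maxclique he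
        refine ⟨M, (hmemF M).mpr hM, ?_⟩
        intro v hv
        rcases Sym2.mem_iff.mp hv with rfl | rfl
        · exact haM
        · exact hbM
    have hθ : ECG.edgeCliqueCoverNum G ≤ F.card :=
      Nat.sInf_le ⟨F, rfl, fun C hC => ((hmemF C).mp hC).1, hcov⟩
    have key : ∀ M : {M : Set V // M ∈ F}, ∃ l, l ∈ (M : Set V) ∧
        (∀ v, G.Adj l v → v ∈ (M : Set V)) := by
      intro M
      have hM : Maximal G.IsClique (M : Set V) := (hmemF M).mp M.2
      have hMne : (M : Set V).Nonempty := by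
        by_contra h
        rw [Set.not_nonempty_iff_eq_empty] at h
        obtain ⟨v⟩ := hconn.nonempty
        have hss : ({v} : Set V) ⊆ (M : Set V) :=
          hM.2 (SimpleGraph.isClique_singleton v) (by simp [h])
        simp [h] at hss
      obtain ⟨l, hl, hs⟩ := ecg_simplicial hP4 hC4 hM hMne
      exact ⟨l, hl, hs⟩
    choose l hl hsimp using key
    have hwex : ∀ M : {M : Set V // M ∈ F}, ∃ u, G.Adj (l M) u := fun M => hnb (l M)
    choose w hlw using hwex
    have hwin : ∀ M : {M : Set V // M ∈ F}, w M ∈ (M : Set V) := fun M => hsimp M _ (hlw M)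
    have hsub : ∀ M M' : {M : Set V // M ∈ F}, l M' ∈ (M : Set V) →
        (M : Set V) ⊆ (M' : Set V) := by
      intro M M' hmem v hv
      rcases eq_or_ne v (l M') with rfl | h
      · exact hl M'
      · exact hsimp M' v (((hmemF M).mp M.2).1 hmem hv h.symm)
    have heqM : ∀ M M' : {M : Set V // M ∈ F}, l M' ∈ (M : Set V) → M = M' := by
      intro M M' hmem
      have h1 := hsub M M' hmem
      have h2 := hsub M' M (h1 (hl M))
      exact Subtype.ext (Set.Subset.antisymm h1 h2)
    let f : {M : Set V // M ∈ F} → G.edgeSet :=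
      fun M => ⟨s(l M, w M), (G.mem_edgeSet).mpr (hlw M)⟩
    have finj : Function.Injective f := by
      intro M M' hMM'
      have hval : s(l M, w M) = s(l M', w M') := congrArg Subtype.val hMM'
      have hmem : l M' ∈ s(l M, w M) := by
        rw [hval]; exact Sym2.mem_mk_left _ _
      apply heqM M M'
      rcases Sym2.mem_iff.mp hmem with h | h
      · rw [h]; exact hl M
      · rw [h]; exact hwin M
    set S : Finset G.edgeSet := F.attach.image f with hS
    have hScard : S.card = F.card := by
      rw [hS, Finset.card_image_of_injective _ finj, Finset.card_attach]
    have hSind : ECG.IsIndepSet (ECG.edgeCliqueGraph G) ↑S := by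
      rintro e he e' he' hne hadj
      obtain ⟨-, hcl⟩ := (hadj : _ ∧ _)
      rw [Finset.mem_coe, hS, Finset.mem_image] at he he'
      obtain ⟨M, -, rfl⟩ := he
      obtain ⟨M', -, rfl⟩ := he'
      apply hne
      congr 1
      apply heqM M M'
      have hmem1 : l M ∈ {v | v ∈ (f M : Sym2 V) ∨ v ∈ (f M' : Sym2 V)} :=
        Or.inl (Sym2.mem_mk_left _ _)
      have hmem2 : l M' ∈ {v | v ∈ (f M : Sym2 V) ∨ v ∈ (f M' : Sym2 V)} :=
        Or.inr (Sym2.mem_mk_left _ _)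
      rcases eq_or_ne (l M) (l M') with h | h
      · rw [← h]; exact hl M
      · exact hsimp M _ (hcl hmem1 hmem2 h)
    have hα : F.card ≤ ECG.indepNum (ECG.edgeCliqueGraph G) := by
      haveI : Fintype G.edgeSet := Fintype.ofFinite _
      apply le_csSup
      · refine ⟨Fintype.card G.edgeSet, ?_⟩
        rintro n ⟨T, -, rfl⟩
        exact T.card_le_univ
      · exact ⟨S, hSind, hScard⟩
    exact hθ.trans hα
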